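/- Let A : Fin p → Matrix (Fin n) (Fin n) ℝ be a T-symmetric tensor (bcirc(A) symmetric). Then there exist tensors U, D : Fin p → Matrix (Fin n) (Fin n) ℝ such that bcirc(U) is an orthogonal matrix, every slice D k is a diagonal matrix, bcirc(D) is symmetric, and bcirc(A) = bcirc(U) · bcirc(D) · (bcirc U)ᵀ. (T-eigen-decomposition of a T-symmetric tensor.) -/

import Mathlib

open Matrix

/-- The block circulant matrix of a third order tensor given by its frontal
slices: `bcirc(A) (k,i) (l,j) = (A (k−l)) i j` with block indices in `ℤ/p`. -/
def bcirc {m n p : ℕ} (A : Fin p → Matrix (Fin m) (Fin n) ℝ) :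
    Matrix (Fin p × Fin m) (Fin p × Fin n) ℝ :=
  Matrix.of fun ki lj => A (ki.1 - lj.1) ki.2 lj.2

namespace TEigen

variable {p : ℕ}

/-- `e p t = exp (2πi t / p)`. -/
noncomputable def e (p : ℕ) (t : ℤ) : ℂ := Complex.exp (2 * Real.pi * Complex.I * t / p)

lemma e_add (s t : ℤ) : e p (s + t) = e p s * e p t := by
  rw [e, e, e, ← Complex.exp_add]
  congr 1
  push_cast
  ring

lemma e_zero : e p 0 = 1 := by simp [e]

lemma e_conj (t : ℤ) : (starRingEnd ℂ) (e p t) = e p (-t) := by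
  rw [e, e, ← Complex.exp_conj]
  congr 1
  simp only [map_div₀, _root_.map_mul, map_intCast, map_natCast, Complex.conj_I, map_ofNat,
    Complex.conj_ofReal]
  push_cast
  ring

lemma e_p_dvd (hp : 1 ≤ p) {t : ℤ} (h : (p : ℤ) ∣ t) : e p t = 1 := by
  obtain ⟨m, rfl⟩ := h
  have hp0 : (p : ℂ) ≠ 0 := by exact_mod_cast Nat.cast_ne_zero.mpr (by omega)
  rw [e]
  have harg : (2 * Real.pi * Complex.I * (((p : ℤ) * m : ℤ) : ℂ) / p : ℂ)
      = m * (2 * Real.pi * Complex.I) := by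
    push_cast
    field_simp
  rw [harg, Complex.exp_int_mul, Complex.exp_two_pi_mul_I, _root_.one_zpow]

lemma e_congr (hp : 1 ≤ p) {s t : ℤ} (h : s % p = t % p) : e p s = e p t := by
  have hd : (p : ℤ) ∣ t - s := Int.ModEq.dvd h
  calc e p s = e p s * e p (t - s) := by rw [e_p_dvd hp hd, mul_one]
    _ = e p t := by rw [← e_add]; congr 1; ring

lemma e_pow (t : ℤ) (k : ℕ) : e p (t * k) = e p t ^ k := by
  rw [e, e, ← Complex.exp_nat_mul]
  congr 1
  push_cast
  ring

lemma e_sum (hp : 1 ≤ p) (t : ℤ) :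
    ∑ k : Fin p, e p (t * k.val) = if (p : ℤ) ∣ t then (p : ℂ) else 0 := by
  have hp0 : (p : ℂ) ≠ 0 := by exact_mod_cast Nat.cast_ne_zero.mpr (by omega)
  split_ifs with h
  · have hone : ∀ k : Fin p, e p (t * k.val) = 1 := fun k => e_p_dvd hp (Dvd.dvd.mul_right h _)
    simp [hone]
  · have hx1 : e p t ≠ 1 := by
      intro hx
      rw [e, Complex.exp_eq_one_iff] at hx
      obtain ⟨m, hm⟩ := hx
      have hpi : (2 * Real.pi * Complex.I : ℂ) ≠ 0 := by
        simp [Real.pi_ne_zero, Complex.I_ne_zero]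
      rw [mul_div_assoc] at hm
      have h2 : ((t : ℂ) / p) = m := mul_left_cancel₀ hpi (by rw [hm]; ring)
      have h3 : (t : ℂ) = m * p := (div_eq_iff hp0).mp h2
      have h4 : t = m * p := by exact_mod_cast h3
      exact h ⟨m, by rw [h4]; ring⟩
    have hxp : e p t ^ p = 1 := by
      rw [← e_pow, mul_comm]
      exact e_p_dvd hp ⟨t, rfl⟩
    calc ∑ k : Fin p, e p (t * k.val) = ∑ k ∈ Finset.range p, e p t ^ k := by
          rw [Fin.sum_univ_eq_sum_range (fun k => e p (t * k))]
          exact Finset.sum_congr rfl fun k _ => e_pow t k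
      _ = (e p t ^ p - 1) / (e p t - 1) := geom_sum_eq hx1 p
      _ = 0 := by rw [hxp]; simp

variable {n : ℕ}

/-- complex block circulant -/
def cbcirc (M : Fin p → Matrix (Fin n) (Fin n) ℂ) :
    Matrix (Fin p × Fin n) (Fin p × Fin n) ℂ :=
  Matrix.of fun ki lj => M (ki.1 - lj.1) ki.2 lj.2

/-- block diagonal -/
def bd (M : Fin p → Matrix (Fin n) (Fin n) ℂ) :
    Matrix (Fin p × Fin n) (Fin p × Fin n) ℂ :=
  Matrix.of fun ki lj => if ki.1 = lj.1 then M ki.1 ki.2 lj.2 else 0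

/-- the (unnormalized) DFT-Kronecker matrix -/
noncomputable def Wm (p n : ℕ) : Matrix (Fin p × Fin n) (Fin p × Fin n) ℂ :=
  Matrix.of fun ki lj => if ki.2 = lj.2 then e p (ki.1.val * lj.1.val) else 0

lemma bd_mul (M N : Fin p → Matrix (Fin n) (Fin n) ℂ) :
    bd M * bd N = bd (fun k => M k * N k) := by
  ext ⟨k, i⟩ ⟨l, j⟩
  simp only [bd, Matrix.mul_apply, Matrix.of_apply, Fintype.sum_prod_type]
  rw [Finset.sum_eq_single k]
  · by_cases h : k = l <;> simp [h, Matrix.mul_apply]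
  · intro m _ hm
    simp [Ne.symm hm]
  · simp

lemma bd_one : bd (fun _ : Fin p => (1 : Matrix (Fin n) (Fin n) ℂ)) = 1 := by
  ext ⟨k, i⟩ ⟨l, j⟩
  by_cases h : k = l <;> by_cases h2 : i = j <;>
    simp [bd, Matrix.one_apply, Prod.ext_iff, h, h2]

lemma bd_conjTranspose (M : Fin p → Matrix (Fin n) (Fin n) ℂ) :
    (bd M)ᴴ = bd (fun k => (M k)ᴴ) := by
  ext ⟨k, i⟩ ⟨l, j⟩
  by_cases h : k = l
  · subst h; simp [bd, Matrix.conjTranspose_apply]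
  · simp [bd, Matrix.conjTranspose_apply, h, Ne.symm h]

lemma fin_dvd_iff (hp : 1 ≤ p) (k l : Fin p) :
    (p : ℤ) ∣ ((k.val : ℤ) - l.val) ↔ k = l := by
  constructor
  · intro h
    obtain ⟨m, hm⟩ := h
    have hk : (k.val : ℤ) < p := by exact_mod_cast k.isLt
    have hl : (l.val : ℤ) < p := by exact_mod_cast l.isLt
    have hk0 : (0:ℤ) ≤ k.val := Int.ofNat_nonneg _
    have hl0 : (0:ℤ) ≤ l.val := Int.ofNat_nonneg _
    have hp' : (1:ℤ) ≤ p := by exact_mod_cast hp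
    have hm0 : m = 0 := by
      by_contra hm0
      rcases lt_or_gt_of_ne hm0 with hlt | hgt
      · have h1 : m ≤ -1 := by omega
        have : (p:ℤ) * m ≤ p * (-1) := by
          exact mul_le_mul_of_nonneg_left h1 (by omega)
        linarith
      · have h1 : (1:ℤ) ≤ m := by omega
        have : (p:ℤ) * 1 ≤ p * m := by
          exact mul_le_mul_of_nonneg_left h1 (by omega)
        linarith
    rw [hm0, mul_zero] at hm
    exact Fin.ext (by omega)
  · rintro rfl; simp

lemma Wm_mul_conjTranspose (hp : 1 ≤ p) :
    Wm p n * (Wm p n)ᴴ = (p : ℂ) • (1 : Matrix (Fin p × Fin n) (Fin p × Fin n) ℂ) := by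
  ext ⟨k, i⟩ ⟨l, j⟩
  simp only [Matrix.mul_apply, Matrix.conjTranspose_apply, Wm, Matrix.of_apply,
    Fintype.sum_prod_type, Matrix.smul_apply, Matrix.one_apply, Prod.ext_iff, smul_eq_mul,
    RCLike.star_def]
  by_cases h2 : i = j
  · subst h2
    have hterm : ∀ m : Fin p, (∑ a : Fin n,
        (if i = a then e p (k.val * m.val) else 0) *
          (starRingEnd ℂ) (if i = a then e p (l.val * m.val) else 0))
        = e p (((k.val : ℤ) - l.val) * m.val) := by
      intro m
      rw [Finset.sum_eq_single i]
      · rw [if_pos rfl, if_pos rfl, e_conj, ← e_add]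
        congr 1; ring
      · intro a _ ha; simp [Ne.symm ha]
      · simp
    rw [Finset.sum_congr rfl (fun m _ => hterm m), e_sum hp]
    by_cases h : k = l
    · subst h; simp
    · have hnd : ¬ (p:ℤ) ∣ ((k.val : ℤ) - l.val) := fun hd => h ((fin_dvd_iff hp k l).mp hd)
      simp [hnd, h]
  · have hterm : ∀ m : Fin p, (∑ a : Fin n,
        (if i = a then e p (k.val * m.val) else 0) *
          (starRingEnd ℂ) (if j = a then e p (l.val * m.val) else 0)) = 0 := by
      intro m
      apply Finset.sum_eq_zero
      intro a _
      by_cases ha : i = a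
      · subst ha
        rw [if_neg (fun hji : j = i => h2 hji.symm)]
        simp
      · simp [ha]
    rw [Finset.sum_congr rfl (fun m _ => hterm m)]
    simp [h2]

lemma Wm_conjTranspose_mul (hp : 1 ≤ p) :
    (Wm p n)ᴴ * Wm p n = (p : ℂ) • (1 : Matrix (Fin p × Fin n) (Fin p × Fin n) ℂ) := by
  ext ⟨k, i⟩ ⟨l, j⟩
  simp only [Matrix.mul_apply, Matrix.conjTranspose_apply, Wm, Matrix.of_apply,
    Fintype.sum_prod_type, Matrix.smul_apply, Matrix.one_apply, Prod.ext_iff, smul_eq_mul,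
    RCLike.star_def]
  by_cases h2 : i = j
  · subst h2
    have hterm : ∀ m : Fin p, (∑ a : Fin n,
        (starRingEnd ℂ) (if a = i then e p (m.val * k.val) else 0) *
          (if a = i then e p (m.val * l.val) else 0))
        = e p (((l.val : ℤ) - k.val) * m.val) := by
      intro m
      rw [Finset.sum_eq_single i]
      · rw [if_pos rfl, if_pos rfl, e_conj, ← e_add]
        congr 1; ring
      · intro a _ ha; simp [ha]
      · simp
    rw [Finset.sum_congr rfl (fun m _ => hterm m), e_sum hp]
    by_cases h : k = l
    · subst h; simp
    · have hnd : ¬ (p:ℤ) ∣ ((l.val : ℤ) - k.val) :=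
        fun hd => h ((fin_dvd_iff hp l k).mp hd).symm
      simp [hnd, h]
  · have hterm : ∀ m : Fin p, (∑ a : Fin n,
        (starRingEnd ℂ) (if a = i then e p (m.val * k.val) else 0) *
          (if a = j then e p (m.val * l.val) else 0)) = 0 := by
      intro m
      apply Finset.sum_eq_zero
      intro a _
      by_cases haj : a = j
      · have hai : ¬ (a = i) := fun hai => h2 (hai.symm.trans haj)
        simp [hai]
      · simp [haj]
    rw [Finset.sum_congr rfl (fun m _ => hterm m)]
    simp [h2]

lemma val_sub_emod (k l : Fin p) :
    (((k - l).val : ℤ)) % p = ((k.val : ℤ) - l.val) % p := by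
  have hl := l.isLt
  have hk := k.isLt
  rw [show (k - l).val = (p - l.val + k.val) % p by rw [Fin.sub_def]]
  push_cast [Nat.cast_sub (le_of_lt hl)]
  rw [Int.emod_emod_of_dvd _ dvd_rfl,
    show (p : ℤ) - l.val + k.val = ((k.val : ℤ) - l.val) + (p : ℤ) * 1 by ring,
    Int.add_mul_emod_self_left]

lemma W_bd_W (hp : 1 ≤ p) (M : Fin p → Matrix (Fin n) (Fin n) ℂ) :
    Wm p n * bd M * (Wm p n)ᴴ
      = cbcirc (fun d => ∑ m : Fin p, e p (d.val * m.val) • M m) := by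
  have h1 : ∀ (k : Fin p) (i : Fin n) (m : Fin p) (a : Fin n),
      (Wm p n * bd M) (k, i) (m, a) = e p (k.val * m.val) * M m i a := by
    intro k i m a
    simp only [Matrix.mul_apply, Wm, bd, Matrix.of_apply, Fintype.sum_prod_type]
    rw [Finset.sum_eq_single m]
    · rw [Finset.sum_eq_single i]
      · simp
      · intro a' _ ha'; simp [Ne.symm ha']
      · simp
    · intro m' _ hm'; simp [hm']
    · simp
  ext ⟨k, i⟩ ⟨l, j⟩
  show (Wm p n * bd M * (Wm p n)ᴴ) (k, i) (l, j) = _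
  have expand : (Wm p n * bd M * (Wm p n)ᴴ) (k, i) (l, j)
      = ∑ m : Fin p, ∑ a : Fin n, (Wm p n * bd M) (k, i) (m, a) *
          (starRingEnd ℂ) (Wm p n (l, j) (m, a)) := by
    rw [Matrix.mul_apply, Fintype.sum_prod_type]
    exact Finset.sum_congr rfl fun m _ => Finset.sum_congr rfl fun a _ => by
      rw [Matrix.conjTranspose_apply, RCLike.star_def]
  rw [expand]
  have step : ∀ m : Fin p, (∑ a : Fin n, (Wm p n * bd M) (k, i) (m, a) *
      (starRingEnd ℂ) (Wm p n (l, j) (m, a)))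
      = e p ((k.val : ℤ) * m.val - l.val * m.val) * M m i j := by
    intro m
    rw [Finset.sum_eq_single j]
    · rw [h1]
      show e p (k.val * m.val) * M m i j *
          (starRingEnd ℂ) (if j = j then e p (l.val * m.val) else 0) = _
      rw [if_pos rfl, e_conj]
      rw [show ((k.val : ℤ) * m.val - l.val * m.val)
            = (k.val * m.val : ℤ) + -((l.val : ℤ) * m.val) by ring, e_add]
      ring
    · intro a _ ha
      rw [h1]
      show e p (k.val * m.val) * M m i a *
          (starRingEnd ℂ) (if j = a then e p (l.val * m.val) else 0) = 0
      rw [if_neg (fun h => ha h.symm)]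
      simp
    · simp
  rw [Finset.sum_congr rfl fun m _ => step m]
  show _ = (∑ m : Fin p, e p ((k - l).val * m.val) • M m) i j
  rw [Matrix.sum_apply]
  refine Finset.sum_congr rfl fun m _ => ?_
  rw [Matrix.smul_apply, smul_eq_mul]
  congr 1
  refine e_congr hp ?_
  have h6 : Int.ModEq (p : ℤ) ((k.val : ℤ) - l.val) ((k - l).val) := (val_sub_emod k l).symm
  have h7 := h6.mul_right (m.val : ℤ)
  rw [show (k.val : ℤ) * m.val - l.val * m.val = ((k.val : ℤ) - l.val) * m.val by ring]
  exact h7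

lemma val_neg_emod (k : Fin p) : (((-k).val : ℤ)) % p = (-(k.val : ℤ)) % p := by
  have hk := k.isLt
  rw [show (-k).val = (p - k.val) % p by rw [Fin.neg_def]]
  push_cast [Nat.cast_sub (le_of_lt hk)]
  rw [Int.emod_emod_of_dvd _ dvd_rfl,
    show (p : ℤ) - k.val = (-(k.val : ℤ)) + (p : ℤ) * 1 by ring,
    Int.add_mul_emod_self_left]

variable (A : Fin p → Matrix (Fin n) (Fin n) ℝ)

/-- discrete Fourier transform of the slices -/
noncomputable def hatA : Fin p → Matrix (Fin n) (Fin n) ℂ :=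
  fun k => ∑ d : Fin p, e p (-((k.val : ℤ) * d.val)) • (A d).map Complex.ofReal

lemma slice_transpose (hp : 1 ≤ p) (hA : (_root_.bcirc A).IsSymm) (d : Fin p) :
    (A d)ᵀ = A (-d) := by
  haveI : NeZero p := ⟨by omega⟩
  ext i j
  have h := hA.apply (d, j) (0, i)
  simp only [_root_.bcirc, Matrix.of_apply, zero_sub, sub_zero] at h
  rw [Matrix.transpose_apply, ← h]

lemma hatA_conjTranspose (hp : 1 ≤ p) (hA : (_root_.bcirc A).IsSymm) (k : Fin p) :
    (hatA A k)ᴴ = hatA A k := by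
  haveI : NeZero p := ⟨by omega⟩
  ext i j
  rw [Matrix.conjTranspose_apply]
  have hji : ∀ d : Fin p, (A d) j i = (A (-d)) i j := by
    intro d
    rw [← slice_transpose A hp hA d, Matrix.transpose_apply]
  simp only [hatA, Matrix.sum_apply, Matrix.smul_apply, Matrix.map_apply, smul_eq_mul,
    RCLike.star_def, map_sum, _root_.map_mul, e_conj, Complex.conj_ofReal, neg_neg]
  rw [Finset.sum_congr rfl (fun d (_ : d ∈ Finset.univ) => by rw [hji d] :
    ∀ d ∈ Finset.univ, e p ((k.val : ℤ) * d.val) * ((A d j i : ℝ) : ℂ)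
      = e p ((k.val : ℤ) * d.val) * ((A (-d) i j : ℝ) : ℂ))]
  rw [← Equiv.sum_comp (Equiv.neg (Fin p))
    (fun d => e p (-((k.val : ℤ) * d.val)) * ((A d i j : ℝ) : ℂ))]
  refine Finset.sum_congr rfl fun d _ => ?_
  simp only [Equiv.neg_apply, neg_neg]
  congr 1
  refine e_congr hp ?_
  have h2 := Int.ModEq.neg (Int.ModEq.mul_left (k.val : ℤ) (val_neg_emod (p := p) d))
  simpa [Int.ModEq] using h2.symm

lemma hatA_neg (hp : 1 ≤ p) (k : Fin p) :
    hatA A (-k) = (hatA A k).map (starRingEnd ℂ) := by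
  ext i j
  simp only [hatA, Matrix.map_apply, Matrix.sum_apply, Matrix.smul_apply, smul_eq_mul,
    map_sum, _root_.map_mul, e_conj, Complex.conj_ofReal, neg_neg]
  refine Finset.sum_congr rfl fun d _ => ?_
  congr 1
  refine e_congr hp ?_
  have h1 := Int.ModEq.neg (Int.ModEq.mul_right (d.val : ℤ) (val_neg_emod (p := p) k))
  simpa [Int.ModEq] using h1

/-- Fourier inversion at slice level -/
lemma hatA_inv (hp : 1 ≤ p) (d : Fin p) :
    ∑ m : Fin p, e p ((d.val : ℤ) * m.val) • hatA A m
      = (p : ℂ) • (A d).map Complex.ofReal := by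
  haveI : NeZero p := ⟨by omega⟩
  ext i j
  simp only [hatA, Matrix.sum_apply, Matrix.smul_apply, Matrix.map_apply, smul_eq_mul,
    Finset.mul_sum]
  rw [Finset.sum_comm]
  have hstep : ∀ d' : Fin p, (∑ m : Fin p,
      e p ((d.val : ℤ) * m.val) * (e p (-((m.val : ℤ) * d'.val)) * ((A d' i j : ℝ) : ℂ)))
      = (if (p : ℤ) ∣ ((d.val : ℤ) - d'.val) then (p : ℂ) else 0) * ((A d' i j : ℝ) : ℂ) := by
    intro d'
    rw [← e_sum hp ((d.val : ℤ) - d'.val), Finset.sum_mul]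
    refine Finset.sum_congr rfl fun m _ => ?_
    rw [← mul_assoc, ← e_add]
    congr 2
    ring
  rw [Finset.sum_congr rfl fun d' _ => hstep d']
  rw [Finset.sum_eq_single d]
  · simp
  · intro d' _ hd'
    rw [if_neg (fun hdvd => hd' ((fin_dvd_iff hp d d').mp hdvd).symm), zero_mul]
  · simp

lemma conjTranspose_map_conj (M : Matrix (Fin n) (Fin n) ℂ) :
    (Mᴴ).map (starRingEnd ℂ) = (M.map (starRingEnd ℂ))ᴴ :=
  Matrix.conjTranspose_map (starRingEnd ℂ) (fun _ => rfl)

lemma map_conj_mul (M N : Matrix (Fin n) (Fin n) ℂ) :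
    (M * N).map (starRingEnd ℂ) = M.map (starRingEnd ℂ) * N.map (starRingEnd ℂ) :=
  Matrix.map_mul

lemma map_conj_one : ((1 : Matrix (Fin n) (Fin n) ℂ)).map (starRingEnd ℂ) = 1 :=
  Matrix.map_one _ (map_zero _) (map_one _)

lemma map_conj_conj (M : Matrix (Fin n) (Fin n) ℂ) :
    (M.map (starRingEnd ℂ)).map (starRingEnd ℂ) = M := by
  ext i j; simp

lemma map_conj_diag (d : Fin n → ℝ) :
    (Matrix.diagonal (fun i => ((d i : ℝ) : ℂ))).map (starRingEnd ℂ)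
      = Matrix.diagonal (fun i => ((d i : ℝ) : ℂ)) := by
  rw [Matrix.diagonal_map (map_zero _)]
  congr 1
  funext i
  simp

lemma map_real_mul (M N : Matrix (Fin n) (Fin n) ℝ) :
    (M * N).map Complex.ofReal = M.map Complex.ofReal * N.map Complex.ofReal := by
  ext i j
  simp [Matrix.mul_apply]

lemma map_real_one : ((1 : Matrix (Fin n) (Fin n) ℝ)).map Complex.ofReal = 1 :=
  Matrix.map_one _ (by simp) (by simp)

lemma map_real_transpose (M : Matrix (Fin n) (Fin n) ℝ) :
    (Mᵀ).map Complex.ofReal = (M.map Complex.ofReal)ᴴ := by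
  ext i j
  simp [Matrix.conjTranspose_apply, Complex.conj_ofReal]

lemma map_real_diag (d : Fin n → ℝ) :
    (Matrix.diagonal d).map Complex.ofReal = Matrix.diagonal (fun i => ((d i : ℝ) : ℂ)) :=
  Matrix.diagonal_map (by simp)

lemma exists_spec (hp : 1 ≤ p) (A : Fin p → Matrix (Fin n) (Fin n) ℝ)
    (hA : (_root_.bcirc A).IsSymm) :
    ∃ (V : Fin p → Matrix (Fin n) (Fin n) ℂ) (lam : Fin p → Fin n → ℝ),
      (∀ k, hatA A k = V k * Matrix.diagonal (fun i => ((lam k i : ℝ) : ℂ)) * (V k)ᴴ) ∧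
      (∀ k, V k * (V k)ᴴ = 1) ∧ (∀ k, (V k)ᴴ * V k = 1) ∧
      (∀ k, V (-k) = (V k).map (starRingEnd ℂ)) ∧ (∀ k, lam (-k) = lam k) := by
  haveI : NeZero p := ⟨by omega⟩
  have hherm : ∀ k, (hatA A k).IsHermitian := fun k => hatA_conjTranspose A hp hA k
  -- the self-conjugate case: a real choice
  have real_case : ∀ k : Fin p, -k = k → ∃ (V : Matrix (Fin n) (Fin n) ℂ) (lam : Fin n → ℝ),
      hatA A k = V * Matrix.diagonal (fun i => ((lam i : ℝ) : ℂ)) * Vᴴ ∧ V * Vᴴ = 1 ∧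
      Vᴴ * V = 1 ∧ V.map (starRingEnd ℂ) = V := by
    intro k hk
    have hconj : ∀ i j, (starRingEnd ℂ) (hatA A k i j) = hatA A k i j := by
      intro i j
      have h := hatA_neg A hp k
      rw [hk] at h
      exact (congrArg (fun M : Matrix (Fin n) (Fin n) ℂ => M i j) h).symm
    set R : Matrix (Fin n) (Fin n) ℝ := Matrix.of (fun i j => (hatA A k i j).re) with hRdef
    have hmapR : R.map Complex.ofReal = hatA A k := by
      ext i j
      exact Complex.conj_eq_iff_re.mp (hconj i j)
    have hRherm : R.IsHermitian := by
      ext i j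
      have h := congrArg (fun M : Matrix (Fin n) (Fin n) ℂ => M i j) (hherm k)
      simp only [Matrix.conjTranspose_apply, RCLike.star_def] at h
      rw [Matrix.conjTranspose_apply, star_trivial]
      show (hatA A k j i).re = (hatA A k i j).re
      rw [← h]
      simp
    have hspec := hRherm.spectral_theorem
    have hspec' : R = (hRherm.eigenvectorUnitary : Matrix (Fin n) (Fin n) ℝ) *
        Matrix.diagonal hRherm.eigenvalues *
        (hRherm.eigenvectorUnitary : Matrix (Fin n) (Fin n) ℝ)ᵀ := by
      simpa [Matrix.star_eq_conjTranspose, Matrix.conjTranspose_eq_transpose_of_trivial]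
        using hspec
    set V0 : Matrix (Fin n) (Fin n) ℝ := (hRherm.eigenvectorUnitary : Matrix (Fin n) (Fin n) ℝ)
    have hV0a : V0 * V0ᵀ = 1 := by
      have := (Matrix.mem_unitaryGroup_iff).mp hRherm.eigenvectorUnitary.2
      simpa [Matrix.star_eq_conjTranspose, Matrix.conjTranspose_eq_transpose_of_trivial]
        using this
    have hV0b : V0ᵀ * V0 = 1 := by
      have := (Matrix.mem_unitaryGroup_iff').mp hRherm.eigenvectorUnitary.2
      simpa [Matrix.star_eq_conjTranspose, Matrix.conjTranspose_eq_transpose_of_trivial]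
        using this
    refine ⟨V0.map Complex.ofReal, hRherm.eigenvalues, ?_, ?_, ?_, ?_⟩
    · calc hatA A k = R.map Complex.ofReal := hmapR.symm
        _ = (V0 * Matrix.diagonal hRherm.eigenvalues * V0ᵀ).map Complex.ofReal := by
              rw [← hspec']
        _ = _ := by rw [map_real_mul, map_real_mul, map_real_diag, map_real_transpose]
    · rw [← map_real_transpose, ← map_real_mul, hV0a, map_real_one]
    · rw [← map_real_transpose, ← map_real_mul, hV0b, map_real_one]
    · ext i j
      simp
  -- generic spectral data
  have spec : ∀ k : Fin p, ∃ (V : Matrix (Fin n) (Fin n) ℂ) (lam : Fin n → ℝ),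
      hatA A k = V * Matrix.diagonal (fun i => ((lam i : ℝ) : ℂ)) * Vᴴ ∧
      V * Vᴴ = 1 ∧ Vᴴ * V = 1 := by
    intro k
    refine ⟨(hherm k).eigenvectorUnitary, (hherm k).eigenvalues, ?_, ?_, ?_⟩
    · simpa [Matrix.star_eq_conjTranspose, Function.comp_def] using (hherm k).spectral_theorem
    · have := (Matrix.mem_unitaryGroup_iff).mp (hherm k).eigenvectorUnitary.2
      simpa [Matrix.star_eq_conjTranspose] using this
    · have := (Matrix.mem_unitaryGroup_iff').mp (hherm k).eigenvectorUnitary.2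
      simpa [Matrix.star_eq_conjTranspose] using this
  choose Vg lamg hg1 hg2 hg3 using spec
  choose Vr lamr hr1 hr2 hr3 hr4 using real_case
  -- combined choice
  refine ⟨fun k => if h : -k = k then Vr k h else if 2 * k.val < p then Vg k
      else (Vg (-k)).map (starRingEnd ℂ),
    fun k => if h : -k = k then lamr k h else if 2 * k.val < p then lamg k else lamg (-k),
    ?_, ?_, ?_, ?_, ?_⟩
  case _ =>  -- P1
    intro k
    by_cases h : -k = k
    · simp only [dif_pos h]
      exact hr1 k h
    · simp only [dif_neg h]
      by_cases h2 : 2 * k.val < p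
      · simp only [if_pos h2]
        exact hg1 k
      · simp only [if_neg h2]
        have hk : hatA A k = (hatA A (-k)).map (starRingEnd ℂ) := by
          have := hatA_neg A hp (-k)
          rwa [neg_neg] at this
        rw [hk, hg1 (-k), map_conj_mul, map_conj_mul, map_conj_diag, conjTranspose_map_conj]
  case _ =>  -- P2a
    intro k
    by_cases h : -k = k
    · simp only [dif_pos h]; exact hr2 k h
    · simp only [dif_neg h]
      by_cases h2 : 2 * k.val < p
      · simp only [if_pos h2]; exact hg2 k
      · simp only [if_neg h2]
        rw [← conjTranspose_map_conj, ← map_conj_mul, hg2 (-k), map_conj_one]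
  case _ =>  -- P2b
    intro k
    by_cases h : -k = k
    · simp only [dif_pos h]; exact hr3 k h
    · simp only [dif_neg h]
      by_cases h2 : 2 * k.val < p
      · simp only [if_pos h2]; exact hg3 k
      · simp only [if_neg h2]
        rw [← conjTranspose_map_conj, ← map_conj_mul, hg3 (-k), map_conj_one]
  case _ =>  -- P3a
    intro k
    by_cases h : -k = k
    · rw [h]
      simp only [dif_pos h]
      exact (hr4 k h).symm
    · have hnk : ¬ (-(-k) = -k) := by
        rw [neg_neg]
        intro hc
        exact h hc.symm
      have hk0 : k.val ≠ 0 := by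
        intro h0
        apply h
        have : k = 0 := Fin.ext h0
        rw [this]
        simp
      have hvneg : (-k).val = p - k.val := by
        rw [show (-k).val = (p - k.val) % p by rw [Fin.neg_def]]
        exact Nat.mod_eq_of_lt (by omega)
      have h2kp : 2 * k.val ≠ p := by
        intro hc
        apply h
        apply Fin.ext
        rw [hvneg]
        omega
      by_cases h2 : 2 * k.val < p
      · have h2' : ¬ (2 * (-k).val < p) := by rw [hvneg]; omega
        beta_reduce
        rw [dif_neg hnk, if_neg h2', dif_neg h, if_pos h2, neg_neg]
      · have h2' : 2 * (-k).val < p := by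
          rw [hvneg]
          have hkk := k.isLt
          omega
        beta_reduce
        rw [dif_neg hnk, if_pos h2', dif_neg h, if_neg h2, map_conj_conj]
  case _ =>  -- P3b
    intro k
    by_cases h : -k = k
    · rw [h]
    · have hnk : ¬ (-(-k) = -k) := by
        rw [neg_neg]
        intro hc
        exact h hc.symm
      have hk0 : k.val ≠ 0 := by
        intro h0
        apply h
        have : k = 0 := Fin.ext h0
        rw [this]
        simp
      have hvneg : (-k).val = p - k.val := by
        rw [show (-k).val = (p - k.val) % p by rw [Fin.neg_def]]
        exact Nat.mod_eq_of_lt (by omega)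
      by_cases h2 : 2 * k.val < p
      · have h2' : ¬ (2 * (-k).val < p) := by rw [hvneg]; omega
        beta_reduce
        rw [dif_neg hnk, if_neg h2', dif_neg h, if_pos h2, neg_neg]
      · have h2' : 2 * (-k).val < p := by
          rw [hvneg]
          have hkk := k.isLt
          have h2kp : 2 * k.val ≠ p := by
            intro hc
            apply h
            apply Fin.ext
            rw [hvneg]
            omega
          omega
        beta_reduce
        rw [dif_neg hnk, if_pos h2', dif_neg h, if_neg h2]

section GeneralMap

variable {m' : Type*} [Fintype m'] [DecidableEq m']

lemma gmap_mul (M N : Matrix m' m' ℝ) :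
    (M * N).map Complex.ofReal = M.map Complex.ofReal * N.map Complex.ofReal := by
  ext i j
  simp [Matrix.mul_apply]

lemma gmap_one : ((1 : Matrix m' m' ℝ)).map Complex.ofReal = 1 :=
  Matrix.map_one _ (by simp) (by simp)

lemma gmap_inj : Function.Injective
    (fun M : Matrix m' m' ℝ => M.map Complex.ofReal) := by
  intro M N h
  ext i j
  have h' := congrArg (fun M : Matrix m' m' ℂ => M i j) h
  simpa using h'

end GeneralMap

lemma cbcirc_invdft (hp : 1 ≤ p) (M : Fin p → Matrix (Fin n) (Fin n) ℂ) :
    cbcirc (fun j => (p : ℂ)⁻¹ • ∑ m : Fin p, e p ((j.val : ℤ) * m.val) • M m)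
      = (p : ℂ)⁻¹ • (Wm p n * bd M * (Wm p n)ᴴ) := by
  rw [W_bd_W hp M]
  ext ⟨k, i⟩ ⟨l, j⟩
  rfl

lemma WbdW_mul (hp : 1 ≤ p) (M N : Fin p → Matrix (Fin n) (Fin n) ℂ) :
    (Wm p n * bd M * (Wm p n)ᴴ) * (Wm p n * bd N * (Wm p n)ᴴ)
      = (p : ℂ) • (Wm p n * bd (fun k => M k * N k) * (Wm p n)ᴴ) := by
  calc (Wm p n * bd M * (Wm p n)ᴴ) * (Wm p n * bd N * (Wm p n)ᴴ)
      = Wm p n * bd M * ((Wm p n)ᴴ * Wm p n) * (bd N * (Wm p n)ᴴ) := by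
        simp only [Matrix.mul_assoc]
    _ = Wm p n * bd M * ((p : ℂ) • (1 : Matrix (Fin p × Fin n) (Fin p × Fin n) ℂ)) *
          (bd N * (Wm p n)ᴴ) := by rw [Wm_conjTranspose_mul hp]
    _ = (p : ℂ) • (Wm p n * bd M * bd N * (Wm p n)ᴴ) := by
        simp only [Matrix.mul_smul, Matrix.smul_mul, Matrix.mul_one, Matrix.mul_assoc]
    _ = (p : ℂ) • (Wm p n * bd (fun k => M k * N k) * (Wm p n)ᴴ) := by
        rw [Matrix.mul_assoc (Wm p n) (bd M) (bd N), bd_mul]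

lemma WbdW_conjTranspose (M : Fin p → Matrix (Fin n) (Fin n) ℂ) :
    (Wm p n * bd M * (Wm p n)ᴴ)ᴴ = Wm p n * bd (fun k => (M k)ᴴ) * (Wm p n)ᴴ := by
  rw [Matrix.conjTranspose_mul, Matrix.conjTranspose_mul, Matrix.conjTranspose_conjTranspose,
    bd_conjTranspose, Matrix.mul_assoc]

lemma main_theorem (p n : ℕ) (hp : 1 ≤ p)
    (A : Fin p → Matrix (Fin n) (Fin n) ℝ) (hA : (_root_.bcirc A).IsSymm) :
    ∃ U D : Fin p → Matrix (Fin n) (Fin n) ℝ,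
      _root_.bcirc U * (_root_.bcirc U)ᵀ = 1 ∧ (_root_.bcirc U)ᵀ * _root_.bcirc U = 1 ∧
      (∀ k : Fin p, (D k).IsDiag) ∧
      (_root_.bcirc D).IsSymm ∧
      _root_.bcirc A = _root_.bcirc U * _root_.bcirc D * (_root_.bcirc U)ᵀ := by
  haveI : NeZero p := ⟨by omega⟩
  have hp0 : (p : ℂ) ≠ 0 := by exact_mod_cast Nat.cast_ne_zero.mpr (by omega)
  obtain ⟨V, lam, hspec, hVa, hVb, hVneg, hlneg⟩ := exists_spec hp A hA
  set Λ : Fin p → Matrix (Fin n) (Fin n) ℂ :=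
    fun k => Matrix.diagonal (fun i => ((lam k i : ℝ) : ℂ)) with hΛdef
  have hΛneg : ∀ k, Λ (-k) = (Λ k).map (starRingEnd ℂ) := by
    intro k
    rw [hΛdef]
    beta_reduce
    rw [hlneg k, map_conj_diag]
  -- the complex tensors
  set cU : Fin p → Matrix (Fin n) (Fin n) ℂ :=
    fun j => (p : ℂ)⁻¹ • ∑ m : Fin p, e p ((j.val : ℤ) * m.val) • V m with hcU
  set cD : Fin p → Matrix (Fin n) (Fin n) ℂ :=
    fun j => (p : ℂ)⁻¹ • ∑ m : Fin p, e p ((j.val : ℤ) * m.val) • Λ m with hcD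
  -- realness of entries
  have hreal : ∀ (M : Fin p → Matrix (Fin n) (Fin n) ℂ),
      (∀ k, M (-k) = (M k).map (starRingEnd ℂ)) →
      ∀ (j : Fin p) (i i' : Fin n),
      (starRingEnd ℂ) ((((p : ℂ)⁻¹ • ∑ m : Fin p, e p ((j.val : ℤ) * m.val) • M m)) i i')
        = (((p : ℂ)⁻¹ • ∑ m : Fin p, e p ((j.val : ℤ) * m.val) • M m)) i i' := by
    intro M hM j i i'
    simp only [Matrix.smul_apply, Matrix.sum_apply, smul_eq_mul, _root_.map_mul, map_sum,
      map_inv₀, map_natCast, e_conj]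
    congr 1
    have hterm : ∀ m : Fin p, (starRingEnd ℂ) (M m i i') = M (-m) i i' := by
      intro m
      exact (congrArg (fun X : Matrix (Fin n) (Fin n) ℂ => X i i') (hM m)).symm
    rw [Finset.sum_congr rfl fun m _ => by rw [hterm m]]
    rw [← Equiv.sum_comp (Equiv.neg (Fin p))
      (fun m => e p ((j.val : ℤ) * m.val) * M m i i')]
    refine Finset.sum_congr rfl fun m _ => ?_
    simp only [Equiv.neg_apply, neg_neg]
    congr 1
    refine e_congr hp ?_
    have h1 := Int.ModEq.mul_left (j.val : ℤ) (val_neg_emod (p := p) m)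
    have h2 : Int.ModEq (p : ℤ) (-((j.val : ℤ) * m.val)) ((j.val : ℤ) * (((-m : Fin p).val : ℤ))) := by
      have h3 := h1.symm
      simpa [mul_neg] using h3
    exact h2
  have hUreal := hreal V hVneg
  have hDreal := hreal Λ hΛneg
  -- the real tensors
  set U : Fin p → Matrix (Fin n) (Fin n) ℝ :=
    fun j => Matrix.of fun i i' => (cU j i i').re with hUdef
  set D : Fin p → Matrix (Fin n) (Fin n) ℝ :=
    fun j => Matrix.of fun i i' => (cD j i i').re with hDdef
  have hUmap : ∀ j, (U j).map Complex.ofReal = cU j := by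
    intro j
    ext i i'
    exact Complex.conj_eq_iff_re.mp (hUreal j i i')
  have hDmap : ∀ j, (D j).map Complex.ofReal = cD j := by
    intro j
    ext i i'
    exact Complex.conj_eq_iff_re.mp (hDreal j i i')
  -- identification of the block circulants
  have hQU : cbcirc cU = (p : ℂ)⁻¹ • (Wm p n * bd V * (Wm p n)ᴴ) := by
    rw [hcU]; exact cbcirc_invdft hp V
  have hQD : cbcirc cD = (p : ℂ)⁻¹ • (Wm p n * bd Λ * (Wm p n)ᴴ) := by
    rw [hcD]; exact cbcirc_invdft hp Λ
  have hQA : cbcirc (fun k => (A k).map Complex.ofReal)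
      = (p : ℂ)⁻¹ • (Wm p n * bd (hatA A) * (Wm p n)ᴴ) := by
    rw [W_bd_W hp (hatA A)]
    have h1 : (fun d : Fin p => ∑ m : Fin p, e p ((d.val : ℤ) * m.val) • hatA A m)
        = fun d => (p : ℂ) • (A d).map Complex.ofReal := funext fun d => hatA_inv A hp d
    rw [h1]
    have h2 : cbcirc (fun d : Fin p => (p : ℂ) • (A d).map Complex.ofReal)
        = (p : ℂ) • cbcirc (fun k => (A k).map Complex.ofReal) := by
      ext ⟨k, i⟩ ⟨l, j⟩; rfl
    rw [h2, inv_smul_smul₀ hp0]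
  have hUconj : (cbcirc cU)ᴴ
      = (p : ℂ)⁻¹ • (Wm p n * bd (fun k => (V k)ᴴ) * (Wm p n)ᴴ) := by
    rw [hQU, Matrix.conjTranspose_smul, WbdW_conjTranspose]
    congr 1
    simp
  -- complex orthogonality
  have hUU : cbcirc cU * (cbcirc cU)ᴴ = 1 := by
    rw [hUconj, hQU, Matrix.smul_mul, Matrix.mul_smul, smul_smul, WbdW_mul hp]
    have hb : (fun k => V k * (V k)ᴴ) = fun _ : Fin p => (1 : Matrix (Fin n) (Fin n) ℂ) :=
      funext hVa
    rw [hb, bd_one, Matrix.mul_one, Wm_mul_conjTranspose hp, smul_smul, smul_smul]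
    rw [show ((p:ℂ)⁻¹ * (p:ℂ)⁻¹ * (p:ℂ) * (p:ℂ)) = 1 by field_simp, one_smul]
  have hUHU : (cbcirc cU)ᴴ * cbcirc cU = 1 := by
    rw [hUconj, hQU, Matrix.smul_mul, Matrix.mul_smul, smul_smul, WbdW_mul hp]
    have hb : (fun k => (V k)ᴴ * V k) = fun _ : Fin p => (1 : Matrix (Fin n) (Fin n) ℂ) :=
      funext hVb
    rw [hb, bd_one, Matrix.mul_one, Wm_mul_conjTranspose hp, smul_smul, smul_smul]
    rw [show ((p:ℂ)⁻¹ * (p:ℂ)⁻¹ * (p:ℂ) * (p:ℂ)) = 1 by field_simp, one_smul]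
  -- complex symmetry
  have hDD : (cbcirc cD)ᴴ = cbcirc cD := by
    rw [hQD, Matrix.conjTranspose_smul, WbdW_conjTranspose]
    have hΛH : (fun k => (Λ k)ᴴ) = Λ := by
      funext k
      rw [hΛdef]
      beta_reduce
      ext i j
      rw [Matrix.conjTranspose_apply]
      by_cases hij : i = j
      · subst hij; simp
      · rw [Matrix.diagonal_apply_ne _ (fun h : j = i => hij h.symm),
          Matrix.diagonal_apply_ne _ hij, star_zero]
    rw [hΛH]
    congr 1
    simp
  -- complex main identity
  have hMain : cbcirc (fun k => (A k).map Complex.ofReal)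
      = cbcirc cU * cbcirc cD * (cbcirc cU)ᴴ := by
    have hXYZ : (Wm p n * bd V * (Wm p n)ᴴ) * (Wm p n * bd Λ * (Wm p n)ᴴ) *
        (Wm p n * bd (fun k => (V k)ᴴ) * (Wm p n)ᴴ)
        = ((p:ℂ) * (p:ℂ)) • (Wm p n * bd (hatA A) * (Wm p n)ᴴ) := by
      rw [WbdW_mul hp, Matrix.smul_mul, WbdW_mul hp, smul_smul]
      have harg : (fun k => V k * Λ k * (V k)ᴴ) = hatA A := funext fun k => (hspec k).symm
      rw [show (fun k => (fun k => V k * Λ k) k * (V k)ᴴ) = hatA A from harg]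
    rw [hQA, hUconj, hQU, hQD]
    simp only [Matrix.smul_mul, Matrix.mul_smul, smul_smul]
    rw [hXYZ, smul_smul]
    congr 1
    field_simp
  -- identification of real block circulants under the complexification map
  have hψU : (_root_.bcirc U).map Complex.ofReal = cbcirc cU := by
    ext ⟨k, i⟩ ⟨l, j⟩
    exact congrArg (fun M : Matrix (Fin n) (Fin n) ℂ => M i j) (hUmap (k - l))
  have hψD : (_root_.bcirc D).map Complex.ofReal = cbcirc cD := by
    ext ⟨k, i⟩ ⟨l, j⟩
    exact congrArg (fun M : Matrix (Fin n) (Fin n) ℂ => M i j) (hDmap (k - l))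
  have hψUT : ((_root_.bcirc U)ᵀ).map Complex.ofReal = (cbcirc cU)ᴴ := by
    ext ⟨k, i⟩ ⟨l, j⟩
    show Complex.ofReal ((U (l - k)) j i) = (starRingEnd ℂ) (cU (l - k) j i)
    rw [hUreal (l - k) j i]
    exact congrArg (fun M : Matrix (Fin n) (Fin n) ℂ => M j i) (hUmap (l - k))
  have hψDT : ((_root_.bcirc D)ᵀ).map Complex.ofReal = (cbcirc cD)ᴴ := by
    ext ⟨k, i⟩ ⟨l, j⟩
    show Complex.ofReal ((D (l - k)) j i) = (starRingEnd ℂ) (cD (l - k) j i)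
    rw [hDreal (l - k) j i]
    exact congrArg (fun M : Matrix (Fin n) (Fin n) ℂ => M j i) (hDmap (l - k))
  have hψA : (_root_.bcirc A).map Complex.ofReal
      = cbcirc (fun k => (A k).map Complex.ofReal) := rfl
  refine ⟨U, D, ?_, ?_, ?_, ?_, ?_⟩
  · apply gmap_inj
    show (_root_.bcirc U * (_root_.bcirc U)ᵀ).map Complex.ofReal = _
    rw [gmap_mul, hψU, hψUT, hUU]
    exact gmap_one.symm
  · apply gmap_inj
    show ((_root_.bcirc U)ᵀ * _root_.bcirc U).map Complex.ofReal = _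
    rw [gmap_mul, hψU, hψUT, hUHU]
    exact gmap_one.symm
  · intro k i j hij
    have hz : cD k i j = 0 := by
      rw [hcD]
      beta_reduce
      simp [Matrix.smul_apply, Matrix.sum_apply, hΛdef, Matrix.diagonal_apply_ne _ hij]
    show (cD k i j).re = 0
    rw [hz]
    rfl
  · show (_root_.bcirc D)ᵀ = _root_.bcirc D
    apply gmap_inj
    show ((_root_.bcirc D)ᵀ).map Complex.ofReal = (_root_.bcirc D).map Complex.ofReal
    rw [hψDT, hψD, hDD]
  · apply gmap_inj
    show (_root_.bcirc A).map Complex.ofReal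
      = (_root_.bcirc U * _root_.bcirc D * (_root_.bcirc U)ᵀ).map Complex.ofReal
    rw [gmap_mul, gmap_mul, hψU, hψUT, hψD, hψA, hMain]

end TEigen

/-- T-eigen-decomposition: every T-symmetric tensor `A` can be
written as `bcirc(A) = bcirc(U) · bcirc(D) · (bcirc U)ᵀ` with `bcirc(U)`
orthogonal, `D` f-diagonal and `bcirc(D)` symmetric. -/
theorem t_eigen_decomposition (n p : ℕ) (hp : 1 ≤ p)
    (A : Fin p → Matrix (Fin n) (Fin n) ℝ) (hA : (bcirc A).IsSymm) :
    ∃ U D : Fin p → Matrix (Fin n) (Fin n) ℝ,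
      bcirc U * (bcirc U)ᵀ = 1 ∧ (bcirc U)ᵀ * bcirc U = 1 ∧
      (∀ k : Fin p, (D k).IsDiag) ∧
      (bcirc D).IsSymm ∧
      bcirc A = bcirc U * bcirc D * (bcirc U)ᵀ := by
  exact TEigen.main_theorem p n hp A hA
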